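/- Let K be an algebraically closed field of characteristic zero and let N, k be positive integers with N ≥ 4k. Let R = K[z_{ia} : i ∈ Fin N, a ∈ Fin (2k)] be the polynomial ring in 2Nk variables. For a, b ∈ Fin (2k) set g_{ab} = Σ_{i ∈ Fin N} z_{ia}·z_{ib}, and let B = Algebra.adjoin K {g_{ab} : a, b ∈ Fin (2k)} be the K-subalgebra of R generated by these elements. Then R is a free B-module. -/

import Mathlib

set_option maxHeartbeats 1000000
set_option synthInstance.maxHeartbeats 400000
open MvPolynomial Finsupp
noncomputable section

namespace FreeMomentSp

variable (N k : ℕ)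

abbrev Mon := (Fin N × Fin (2*k)) →₀ ℕ


/-- weight of a variable (i,a): N^2 - (i-2a)^2. -/
def w (v : Fin N × Fin (2*k)) : ℕ := ((N:ℤ)^2 - ((v.1:ℤ) - 2*(v.2:ℤ))^2).toNat

lemma w_coe (hst : 4*k ≤ N) (v : Fin N × Fin (2*k)) :
    (w N k v : ℤ) = (N:ℤ)^2 - ((v.1:ℤ) - 2*(v.2:ℤ))^2 := by
  have h1 : (v.1 : ℕ) < N := v.1.isLt
  have h2 : (v.2 : ℕ) < 2*k := v.2.isLt
  have h1' : (v.1 : ℤ) < (N:ℤ) := by exact_mod_cast h1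
  have h0 : (0:ℤ) ≤ (v.1:ℤ) := by positivity
  have h2' : (v.2 : ℤ) ≤ 2*(k:ℤ) - 1 := by
    have : (v.2 : ℕ) + 1 ≤ 2*k := h2
    push_cast at this ⊢; omega
  have hst' : 4*(k:ℤ) ≤ (N:ℤ) := by exact_mod_cast hst
  have hb : ((v.1:ℤ) - 2*(v.2:ℤ))^2 ≤ ((N:ℤ)-1)^2 := by
    apply sq_le_sq' <;> nlinarith
  have hnn : (0:ℤ) ≤ (N:ℤ)^2 - ((v.1:ℤ) - 2*(v.2:ℤ))^2 := by nlinarith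
  simp [w, Int.toNat_of_nonneg hnn]

def rowIdx (hst : 4*k ≤ N) (a b : Fin (2*k)) : Fin N :=
  ⟨a.val + b.val, by have := a.isLt; have := b.isLt; omega⟩

lemma w_key (hst : 4*k ≤ N) (a b : Fin (2*k)) (i : Fin N) (hi : (i:ℕ) ≠ a.val + b.val) :
    w N k (i, a) + w N k (i, b)
      < w N k (rowIdx N k hst a b, a) + w N k (rowIdx N k hst a b, b) := by
  have hval : ((rowIdx N k hst a b : Fin N) : ℕ) = a.val + b.val := rfl
  have hcast : ((rowIdx N k hst a b : Fin N) : ℤ) = (a:ℤ) + (b:ℤ) := by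
    rw [hval]; push_cast; ring
  rw [← Nat.cast_lt (α := ℤ)]
  push_cast
  rw [w_coe N k hst, w_coe N k hst, w_coe N k hst, w_coe N k hst, hcast]
  have hne : (i:ℤ) - ((a:ℤ)+(b:ℤ)) ≠ 0 := by
    intro h
    apply hi
    have : (i:ℤ) = (a:ℤ)+(b:ℤ) := by linarith
    exact_mod_cast this
  have h1 : 1 ≤ ((i:ℤ) - ((a:ℤ)+(b:ℤ)))^2 := by
    nlinarith [Int.one_le_abs hne, sq_abs ((i:ℤ) - ((a:ℤ)+(b:ℤ))), abs_nonneg ((i:ℤ) - ((a:ℤ)+(b:ℤ)))]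
  nlinarith [h1]



def W (ν : Mon N k) : ℕ := ν.sum fun v n => n * w N k v

lemma W_zero : W N k 0 = 0 := Finsupp.sum_zero_index

lemma W_add (μ ν : Mon N k) : W N k (μ + ν) = W N k μ + W N k ν :=
  Finsupp.sum_add_index' (fun _ => zero_mul _) (fun _ m n => add_mul m n _)

lemma W_single (v n) : W N k (Finsupp.single v n) = n * w N k v :=
  Finsupp.sum_single_index (zero_mul _)

lemma W_pair (u v) : W N k (Finsupp.single u 1 + Finsupp.single v 1) = w N k u + w N k v := by
  rw [W_add, W_single, W_single, one_mul, one_mul]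

section TopPart
variable {K : Type*} [Field K]

/-- `t` is the unique monomial of maximal weight in `f`, with coefficient 1. -/
def Top (f : MvPolynomial (Fin N × Fin (2*k)) K) (t : Mon N k) : Prop :=
  coeff t f = 1 ∧ ∀ ν ∈ f.support, W N k ν ≤ W N k t ∧ (W N k ν = W N k t → ν = t)

lemma top_monomial (μ : Mon N k) : Top N k (monomial μ (1:K)) μ := by
  classical
  constructor
  · simp [coeff_monomial]
  · intro ν hν
    rw [support_monomial, if_neg one_ne_zero] at hν
    simp only [Finset.mem_singleton] at hν
    subst hν; exact ⟨le_rfl, fun _ => rfl⟩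

lemma top_one : Top N k (1 : MvPolynomial (Fin N × Fin (2*k)) K) 0 := by
  have := top_monomial N k (K := K) 0
  rwa [monomial_zero', C_1] at this

lemma top_mul {f g : MvPolynomial (Fin N × Fin (2*k)) K} {t u : Mon N k}
    (hf : Top N k f t) (hg : Top N k g u) : Top N k (f * g) (t + u) := by
  constructor
  · rw [coeff_mul]
    rw [Finset.sum_eq_single (t, u)]
    · rw [hf.1, hg.1, one_mul]
    · rintro ⟨x, y⟩ hxy hne
      rw [Finset.HasAntidiagonal.mem_antidiagonal] at hxy
      by_contra hc
      have hx : x ∈ f.support := by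
        rw [MvPolynomial.mem_support_iff]; intro h; apply hc; simp [h]
      have hy : y ∈ g.support := by
        rw [MvPolynomial.mem_support_iff]; intro h; apply hc; simp [h]
      have hWx := (hf.2 x hx).1
      have hWy := (hg.2 y hy).1
      have hsum : W N k x + W N k y = W N k t + W N k u := by
        rw [← W_add, ← W_add, hxy]
      have hex : W N k x = W N k t := by omega
      have hey : W N k y = W N k u := by omega
      exact hne (Prod.ext ((hf.2 x hx).2 hex) ((hg.2 y hy).2 hey))
    · intro h
      exact absurd (by simp) h
  · intro ν hν
    have hsub := MvPolynomial.support_mul f g hν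
    rw [Finset.mem_add] at hsub
    obtain ⟨x, hx, y, hy, rfl⟩ := hsub
    have hWx := (hf.2 x hx).1
    have hWy := (hg.2 y hy).1
    rw [W_add, W_add]
    constructor
    · omega
    · intro he
      have hex : W N k x = W N k t := by omega
      have hey : W N k y = W N k u := by omega
      rw [(hf.2 x hx).2 hex, (hg.2 y hy).2 hey]

lemma top_pow {f : MvPolynomial (Fin N × Fin (2*k)) K} {t : Mon N k} (hf : Top N k f t) :
    ∀ n : ℕ, Top N k (f ^ n) (n • t)
  | 0 => by rw [pow_zero, zero_smul]; exact top_one N k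
  | (n+1) => by
      rw [pow_succ, succ_nsmul]
      exact top_mul N k (top_pow hf n) hf

end TopPart


section Gens
variable {K : Type*} [Field K]

/-- the moment map component g_{ab}. -/
def gp (a b : Fin (2*k)) : MvPolynomial (Fin N × Fin (2*k)) K :=
  ∑ i : Fin N, X (i,a) * X (i,b)

lemma gp_comm (a b : Fin (2*k)) : gp N k (K:=K) a b = gp N k (K:=K) b a := by
  unfold gp
  exact Finset.sum_congr rfl fun i _ => mul_comm _ _

/-- the designated top monomial of g_{ab}. -/
def sfun (hst : 4*k ≤ N) (a b : Fin (2*k)) : Mon N k :=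
  Finsupp.single (rowIdx N k hst a b, a) 1 + Finsupp.single (rowIdx N k hst a b, b) 1

lemma X_mul_X (i : Fin N) (a b : Fin (2*k)) :
    (X (i,a) * X (i,b) : MvPolynomial (Fin N × Fin (2*k)) K)
      = monomial (Finsupp.single (i,a) 1 + Finsupp.single (i,b) 1) (1:K) := by
  rw [X, X, monomial_mul, one_mul]

lemma top_gp (hst : 4*k ≤ N) (a b : Fin (2*k)) :
    Top N k (gp N k (K:=K) a b) (sfun N k hst a b) := by
  classical
  have hmono : ∀ i : Fin N, (X (i,a) * X (i,b) : MvPolynomial (Fin N × Fin (2*k)) K)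
      = monomial (Finsupp.single (i,a) 1 + Finsupp.single (i,b) 1) (1:K) :=
    fun i => X_mul_X N k i a b
  set r := rowIdx N k hst a b with hr
  have hs : sfun N k hst a b = Finsupp.single (r,a) 1 + Finsupp.single (r,b) 1 := rfl
  have hinj : ∀ i : Fin N, i ≠ r →
      (Finsupp.single ((i:Fin N),a) 1 + Finsupp.single (i,b) 1 : Mon N k)
        ≠ Finsupp.single (r,a) 1 + Finsupp.single (r,b) 1 := by
    intro i hir h
    have h2 := DFunLike.congr_fun h (r,a)
    simp only [Finsupp.add_apply, Finsupp.single_apply, Prod.mk.injEq] at h2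
    rw [if_neg (by tauto), if_neg (by tauto), if_pos (by tauto)] at h2
    split_ifs at h2 <;> omega
  constructor
  · rw [gp, MvPolynomial.coeff_sum, hs]
    rw [Finset.sum_eq_single r]
    · rw [hmono r, coeff_monomial, if_pos rfl]
    · intro i _ hir
      rw [hmono i, coeff_monomial, if_neg (hinj i hir)]
    · intro h; exact absurd (Finset.mem_univ r) h
  · intro ν hν
    have := MvPolynomial.support_sum hν
    rw [Finset.mem_biUnion] at this
    obtain ⟨i, _, hi⟩ := this
    rw [hmono i, support_monomial, if_neg one_ne_zero, Finset.mem_singleton] at hi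
    subst hi
    rw [hs, W_pair, W_pair]
    by_cases hir : i = r
    · rw [hir]
      exact ⟨le_rfl, fun _ => rfl⟩
    · have hlt := w_key N k hst a b i (fun hval => hir (Fin.ext hval))
      rw [← hr] at hlt
      exact ⟨le_of_lt hlt, fun h => absurd h (by omega)⟩

end Gens

/-- index of the generators: unordered pairs (a ≤ b). -/
def Pairs := {q : Fin (2*k) × Fin (2*k) // q.1 ≤ q.2}

instance : DecidableEq (Pairs k) := fun p q =>
  decidable_of_iff (p.val = q.val) Subtype.ext_iff.symm

section Products
variable {K : Type*} [Field K]

def gpP (p : Pairs k) : MvPolynomial (Fin N × Fin (2*k)) K := gp N k p.1.1 p.1.2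

def sfunP (hst : 4*k ≤ N) (p : Pairs k) : Mon N k := sfun N k hst p.1.1 p.1.2

lemma top_gpP (hst : 4*k ≤ N) (p : Pairs k) :
    Top N k (gpP N k (K:=K) p) (sfunP N k hst p) := top_gp N k hst p.1.1 p.1.2

def Gprod (e : Pairs k →₀ ℕ) : MvPolynomial (Fin N × Fin (2*k)) K :=
  e.prod fun p n => (gpP N k p)^n

def ES (hst : 4*k ≤ N) (e : Pairs k →₀ ℕ) : Mon N k :=
  e.sum fun p n => n • sfunP N k hst p

lemma Gprod_zero : Gprod N k (K:=K) 0 = 1 := Finsupp.prod_zero_index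

lemma Gprod_add (e e' : Pairs k →₀ ℕ) :
    Gprod N k (K:=K) (e + e') = Gprod N k e * Gprod N k e' :=
  Finsupp.prod_add_index' (fun p => pow_zero _) (fun p m n => pow_add _ m n)

lemma Gprod_single (p : Pairs k) (n : ℕ) :
    Gprod N k (K:=K) (Finsupp.single p n) = (gpP N k p)^n :=
  Finsupp.prod_single_index (pow_zero _)

lemma ES_zero (hst : 4*k ≤ N) : ES N k hst 0 = 0 := Finsupp.sum_zero_index

lemma ES_add (hst : 4*k ≤ N) (e e' : Pairs k →₀ ℕ) :
    ES N k hst (e + e') = ES N k hst e + ES N k hst e' :=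
  Finsupp.sum_add_index' (fun p => zero_smul ℕ _) (fun p m n => add_smul m n _)

lemma ES_single (hst : 4*k ≤ N) (p : Pairs k) (n : ℕ) :
    ES N k hst (Finsupp.single p n) = n • sfunP N k hst p :=
  Finsupp.sum_single_index (zero_smul ℕ _)

lemma top_Gprod (hst : 4*k ≤ N) (e : Pairs k →₀ ℕ) :
    Top N k (Gprod N k (K:=K) e) (ES N k hst e) := by
  induction e using Finsupp.induction with
  | zero => rw [Gprod_zero, ES_zero]; exact top_one N k
  | single_add p n e hp hn ih =>
    rw [Gprod_add, ES_add, Gprod_single, ES_single]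
    exact top_mul N k (top_pow N k (top_gpP N k (K:=K) hst p) n) ih

end Products

section SuppFacts
variable (hst : 4*k ≤ N)

lemma sfun_apply (a b : Fin (2*k)) (v : Fin N × Fin (2*k)) :
    sfun N k hst a b v
      = (if (rowIdx N k hst a b, a) = v then 1 else 0)
        + (if (rowIdx N k hst a b, b) = v then 1 else 0) := by
  classical
  simp [sfun, Finsupp.single_apply]

lemma mem_support_sfun {a b : Fin (2*k)} {v : Fin N × Fin (2*k)}
    (hv : v ∈ (sfun N k hst a b).support) :
    v = (rowIdx N k hst a b, a) ∨ v = (rowIdx N k hst a b, b) := by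
  classical
  rw [Finsupp.mem_support_iff, sfun_apply] at hv
  by_contra hc
  push_neg at hc
  rw [if_neg (fun h => hc.1 h.symm), if_neg (fun h => hc.2 h.symm)] at hv
  exact hv rfl

lemma sfun_mem_support_left (a b : Fin (2*k)) :
    ((rowIdx N k hst a b, a) : Fin N × Fin (2*k)) ∈ (sfun N k hst a b).support := by
  classical
  rw [Finsupp.mem_support_iff, sfun_apply, if_pos rfl]
  omega

lemma pair_eq {p q : Pairs k} {v : Fin N × Fin (2*k)}
    (hvp : v ∈ (sfunP N k hst p).support) (hvq : v ∈ (sfunP N k hst q).support) : p = q := by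
  obtain ⟨⟨a, b⟩, hab⟩ := p
  obtain ⟨⟨a', b'⟩, hab'⟩ := q
  have h1 := mem_support_sfun N k hst hvp
  have h2 := mem_support_sfun N k hst hvq
  have hab2 : (a:ℕ) ≤ b := hab
  have hab2' : (a':ℕ) ≤ b' := hab'
  have key : (a:ℕ) = a' ∧ (b:ℕ) = b' := by
    rcases h1 with h1 | h1 <;> rcases h2 with h2 | h2 <;>
    · rw [h1] at h2
      rw [Prod.ext_iff] at h2
      have hrow : (a:ℕ) + b = a' + b' := congrArg Fin.val h2.1
      have hcol := congrArg Fin.val h2.2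
      simp only [] at hcol
      omega
  refine Subtype.ext (Prod.ext (Fin.ext key.1) (Fin.ext key.2))

lemma sfunP_apply_eq_zero {p q : Pairs k} (hpq : q ≠ p) {v : Fin N × Fin (2*k)}
    (hv : v ∈ (sfunP N k hst p).support) : sfunP N k hst q v = 0 := by
  by_contra h
  exact hpq (pair_eq N k hst (Finsupp.mem_support_iff.mpr h) hv)

lemma ES_apply_mem (e : Pairs k →₀ ℕ) (p : Pairs k) {v : Fin N × Fin (2*k)}
    (hv : v ∈ (sfunP N k hst p).support) :
    ES N k hst e v = e p * sfunP N k hst p v := by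
  classical
  rw [ES, Finsupp.sum_apply, Finsupp.sum]
  rw [Finset.sum_eq_single p]
  · simp
  · intro q hq hqp
    rw [Finsupp.smul_apply, sfunP_apply_eq_zero N k hst hqp hv, smul_zero]
  · intro hp
    rw [Finsupp.notMem_support_iff.mp hp]
    simp

lemma ES_apply_nmem (e : Pairs k →₀ ℕ) {v : Fin N × Fin (2*k)}
    (h : ∀ p : Pairs k, v ∉ (sfunP N k hst p).support) :
    ES N k hst e v = 0 := by
  classical
  rw [ES, Finsupp.sum_apply, Finsupp.sum]
  apply Finset.sum_eq_zero
  intro q hq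
  rw [Finsupp.smul_apply, Finsupp.notMem_support_iff.mp (h q), smul_zero]

/-- a monomial is reduced if no designated leading monomial divides it. -/
def Red (μ : Mon N k) : Prop := ∀ p : Pairs k, ¬ sfunP N k hst p ≤ μ

lemma phi_inj {e e' : Pairs k →₀ ℕ} {μ μ' : Mon N k}
    (hμ : Red N k hst μ) (hμ' : Red N k hst μ')
    (h : ES N k hst e + μ = ES N k hst e' + μ') : e = e' ∧ μ = μ' := by
  have hex : ∀ (m : Mon N k) (p : Pairs k), Red N k hst m →
      ∃ v, v ∈ (sfunP N k hst p).support ∧ m v < sfunP N k hst p v := by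
    intro m p hm
    have := hm p
    rw [Finsupp.le_def] at this
    push_neg at this
    obtain ⟨v, hv⟩ := this
    exact ⟨v, Finsupp.mem_support_iff.mpr (by omega), hv⟩
  have he : e = e' := by
    ext p
    obtain ⟨v, hvm, hv⟩ := hex μ p hμ
    obtain ⟨v', hvm', hv'⟩ := hex μ' p hμ'
    have eq1 := DFunLike.congr_fun h v
    have eq2 := DFunLike.congr_fun h v'
    rw [Finsupp.add_apply, Finsupp.add_apply, ES_apply_mem N k hst e p hvm,
      ES_apply_mem N k hst e' p hvm] at eq1
    rw [Finsupp.add_apply, Finsupp.add_apply, ES_apply_mem N k hst e p hvm',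
      ES_apply_mem N k hst e' p hvm'] at eq2
    rcases lt_trichotomy (e p) (e' p) with hlt | heq | hgt
    · exfalso
      obtain ⟨d, hd⟩ : ∃ d, e' p = e p + (d+1) := ⟨e' p - e p - 1, by omega⟩
      rw [hd, add_mul] at eq1
      have hle : sfunP N k hst p v ≤ (d+1) * sfunP N k hst p v :=
        Nat.le_mul_of_pos_left _ (Nat.succ_pos d)
      linarith
    · exact heq
    · exfalso
      obtain ⟨d, hd⟩ : ∃ d, e p = e' p + (d+1) := ⟨e p - e' p - 1, by omega⟩
      rw [hd, add_mul] at eq2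
      have hle : sfunP N k hst p v' ≤ (d+1) * sfunP N k hst p v' :=
        Nat.le_mul_of_pos_left _ (Nat.succ_pos d)
      linarith
  refine ⟨he, ?_⟩
  rw [he] at h
  exact add_left_cancel h

lemma phi_exists : ∀ (n : ℕ) (ν : Mon N k), (ν.sum fun _ m => m) = n →
    ∃ (e : Pairs k →₀ ℕ) (μ : Mon N k), Red N k hst μ ∧ ES N k hst e + μ = ν := by
  intro n
  induction n using Nat.strong_induction_on with
  | _ n ih =>
    intro ν hν
    by_cases hred : Red N k hst ν
    · exact ⟨0, ν, hred, by rw [ES_zero, zero_add]⟩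
    · rw [Red] at hred
      push_neg at hred
      obtain ⟨p, hp⟩ := hred
      set ν' := ν - sfunP N k hst p with hν'
      have hsplit : sfunP N k hst p + ν' = ν := add_tsub_cancel_of_le hp
      have hsize : ∀ m m' : Mon N k, ((m + m').sum fun _ x => x)
          = (m.sum fun _ x => x) + (m'.sum fun _ x => x) :=
        fun m m' => Finsupp.sum_add_index' (fun _ => rfl) (fun _ _ _ => rfl)
      have hpos : 0 < ((sfunP N k hst p).sum fun _ x => x) := by
        have hmem : ((rowIdx N k hst p.1.1 p.1.2, p.1.1) : Fin N × Fin (2*k))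
            ∈ (sfunP N k hst p).support := sfun_mem_support_left N k hst p.1.1 p.1.2
        have hles := Finset.single_le_sum (f := fun v => sfunP N k hst p v)
          (fun i _ => Nat.zero_le _) hmem
        have hv : sfunP N k hst p (rowIdx N k hst p.1.1 p.1.2, p.1.1) ≠ 0 :=
          Finsupp.mem_support_iff.mp hmem
        rw [Finsupp.sum]
        omega
      have hlt : (ν'.sum fun _ x => x) < n := by
        rw [← hν, ← hsplit, hsize]
        omega
      obtain ⟨e, μ, hr, heq⟩ := ih _ hlt ν' rfl
      refine ⟨e + Finsupp.single p 1, μ, hr, ?_⟩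
      rw [ES_add, ES_single, one_smul]
      ext v
      have h1 := DFunLike.congr_fun heq v
      have h2 := DFunLike.congr_fun hsplit v
      simp only [Finsupp.add_apply] at h1 h2 ⊢
      omega

end SuppFacts

section LinAlg
variable {K : Type*} [Field K]
variable (hst : 4*k ≤ N)

/-- reduced monomials -/
def RedT := {μ : Mon N k // Red N k hst μ}

/-- the spanning family: products of the `g`'s times reduced monomials -/
def VR (x : (Pairs k →₀ ℕ) × RedT N k hst) : MvPolynomial (Fin N × Fin (2*k)) K :=
  Gprod N k x.1 * monomial x.2.1 (1:K)

def Phi (x : (Pairs k →₀ ℕ) × RedT N k hst) : Mon N k := ES N k hst x.1 + x.2.1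

lemma top_VR (x : (Pairs k →₀ ℕ) × RedT N k hst) :
    Top N k (VR N k hst (K:=K) x) (Phi N k hst x) :=
  top_mul N k (top_Gprod N k hst x.1) (top_monomial N k x.2.1)

lemma Phi_injective : Function.Injective (Phi N k hst) := by
  rintro ⟨e, μ⟩ ⟨e', μ'⟩ h
  obtain ⟨h1, h2⟩ := phi_inj N k hst μ.2 μ'.2 h
  exact Prod.ext h1 (Subtype.ext h2)

lemma indep (t : Finset ((Pairs k →₀ ℕ) × RedT N k hst))
    (c : (Pairs k →₀ ℕ) × RedT N k hst → K)
    (h : ∑ x ∈ t, c x • VR N k hst (K:=K) x = 0) : ∀ x ∈ t, c x = 0 := by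
  classical
  by_contra hcon
  push_neg at hcon
  obtain ⟨x₀, hx₀, hc0⟩ := hcon
  set t' := t.filter (fun x => c x ≠ 0) with ht'
  have htne : t'.Nonempty := ⟨x₀, Finset.mem_filter.mpr ⟨hx₀, hc0⟩⟩
  obtain ⟨xm, hxm, hmax⟩ := Finset.exists_max_image t' (fun x => W N k (Phi N k hst x)) htne
  have hxmt : xm ∈ t := (Finset.mem_filter.mp hxm).1
  have hxmc : c xm ≠ 0 := (Finset.mem_filter.mp hxm).2
  have h0 : coeff (Phi N k hst xm) (∑ x ∈ t, c x • VR N k hst (K:=K) x) = 0 := by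
    rw [h]; exact coeff_zero _
  rw [MvPolynomial.coeff_sum] at h0
  rw [Finset.sum_eq_single xm] at h0
  · rw [coeff_smul, (top_VR N k hst xm).1, smul_eq_mul, mul_one] at h0
    exact hxmc h0
  · intro x hx hne
    rw [coeff_smul, smul_eq_mul]
    by_cases hcx : c x = 0
    · rw [hcx, zero_mul]
    · have hxt' : x ∈ t' := Finset.mem_filter.mpr ⟨hx, hcx⟩
      by_contra hterm
      have hc2 : coeff (Phi N k hst xm) (VR N k hst (K:=K) x) ≠ 0 := by
        intro hz; exact hterm (by rw [hz, mul_zero])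
      have hmem : Phi N k hst xm ∈ (VR N k hst (K:=K) x).support :=
        MvPolynomial.mem_support_iff.mpr hc2
      have htop := (top_VR N k hst (K:=K) x).2 _ hmem
      have hle := hmax x hxt'
      have heq : W N k (Phi N k hst xm) = W N k (Phi N k hst x) := le_antisymm htop.1 hle
      have := htop.2 heq
      exact hne (Phi_injective N k hst this.symm)
  · intro hxm'
    exact absurd hxmt hxm'

lemma spanAux : ∀ (d : ℕ) (f : MvPolynomial (Fin N × Fin (2*k)) K),
    (∀ ν ∈ f.support, W N k ν < d) →
    f ∈ Submodule.span K (Set.range (VR N k hst (K:=K))) := by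
  intro d
  induction d with
  | zero =>
    intro f hf
    have hsupp : f.support = ∅ :=
      Finset.eq_empty_of_forall_notMem fun ν hν => absurd (hf ν hν) (Nat.not_lt_zero _)
    rw [MvPolynomial.support_eq_empty.mp hsupp]
    exact Submodule.zero_mem _
  | succ d ih =>
    intro f hf
    classical
    have hchoose : ∀ ν : Mon N k, ∃ x : (Pairs k →₀ ℕ) × RedT N k hst,
        Phi N k hst x = ν := by
      intro ν
      obtain ⟨e, μ, hr, he⟩ := phi_exists N k hst _ ν rfl
      exact ⟨(e, ⟨μ, hr⟩), he⟩
    choose dec hdec using hchoose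
    set T := f.support.filter (fun ν => W N k ν = d) with hT
    set g := f - ∑ ν ∈ T, (coeff ν f) • VR N k hst (K:=K) (dec ν) with hg
    have hsupg : ∀ ν' ∈ g.support, W N k ν' < d := by
      intro ν' hν'
      by_contra hge
      push_neg at hge
      have hcoeff : coeff ν' g ≠ 0 := MvPolynomial.mem_support_iff.mp hν'
      have hcg : coeff ν' g = coeff ν' f -
          ∑ ν ∈ T, (coeff ν f) * coeff ν' (VR N k hst (K:=K) (dec ν)) := by
        rw [hg, MvPolynomial.coeff_sub, MvPolynomial.coeff_sum]
        simp only [coeff_smul, smul_eq_mul]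
      have hterm : ∀ ν ∈ T, (coeff ν f) * coeff ν' (VR N k hst (K:=K) (dec ν))
          = if ν = ν' then coeff ν f else 0 := by
        intro ν hνT
        have hWν : W N k ν = d := (Finset.mem_filter.mp hνT).2
        by_cases hee : ν = ν'
        · subst hee
          rw [if_pos rfl]
          have h1 := (top_VR N k hst (K:=K) (dec ν)).1
          rw [hdec ν] at h1
          rw [h1, mul_one]
        · rw [if_neg hee]
          by_cases hz : coeff ν' (VR N k hst (K:=K) (dec ν)) = 0
          · rw [hz, mul_zero]
          · exfalso
            have hmem : ν' ∈ (VR N k hst (K:=K) (dec ν)).support :=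
              MvPolynomial.mem_support_iff.mpr hz
            have htop := (top_VR N k hst (K:=K) (dec ν)).2 _ hmem
            rw [hdec ν] at htop
            have : W N k ν' = d := le_antisymm (hWν ▸ htop.1) hge
            exact hee ((htop.2 (by omega)).symm)
      rw [Finset.sum_congr rfl hterm] at hcg
      rw [Finset.sum_ite_eq' T ν' (fun ν => coeff ν f)] at hcg
      by_cases hν'T : ν' ∈ T
      · rw [if_pos hν'T] at hcg
        rw [sub_self] at hcg
        exact hcoeff hcg
      · rw [if_neg hν'T] at hcg
        have hν'f : coeff ν' f = 0 := by
          by_contra hne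
          have hsup : ν' ∈ f.support := MvPolynomial.mem_support_iff.mpr hne
          have : W N k ν' < d + 1 := hf ν' hsup
          have : W N k ν' = d := by omega
          exact hν'T (Finset.mem_filter.mpr ⟨hsup, this⟩)
        rw [hν'f, sub_zero] at hcg
        exact hcoeff hcg
    have hgmem := ih g hsupg
    have hfg : f = g + ∑ ν ∈ T, (coeff ν f) • VR N k hst (K:=K) (dec ν) := by
      rw [hg]; ring
    rw [hfg]
    refine Submodule.add_mem _ hgmem (Submodule.sum_mem _ fun ν _ => ?_)
    exact Submodule.smul_mem _ _ (Submodule.subset_span ⟨dec ν, rfl⟩)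

lemma spanVR (f : MvPolynomial (Fin N × Fin (2*k)) K) :
    f ∈ Submodule.span K (Set.range (VR N k hst (K:=K))) := by
  apply spanAux N k hst ((f.support.sup (W N k)) + 1)
  intro ν hν
  exact Nat.lt_succ_of_le (Finset.le_sup hν)

end LinAlg

section Subalg
variable {K : Type*} [Field K]
variable (hst : 4*k ≤ N)

def Sset : Set (MvPolynomial (Fin N × Fin (2*k)) K) :=
  {p | ∃ a b : Fin (2*k), p = ∑ i : Fin N, X (i, a) * X (i, b)}

lemma gpP_mem (p : Pairs k) :
    gpP N k (K:=K) p ∈ Algebra.adjoin K (Sset N k (K:=K)) :=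
  Algebra.subset_adjoin ⟨p.1.1, p.1.2, rfl⟩

lemma Gprod_mem (e : Pairs k →₀ ℕ) :
    Gprod N k (K:=K) e ∈ Algebra.adjoin K (Sset N k (K:=K)) := by
  rw [Gprod, Finsupp.prod]
  exact prod_mem fun p _ => pow_mem (gpP_mem N k p) _

lemma closure_sub : ∀ x ∈ Submonoid.closure (Sset N k (K:=K)),
    ∃ e : Pairs k →₀ ℕ, Gprod N k (K:=K) e = x := by
  intro x hx
  induction hx using Submonoid.closure_induction with
  | mem y hy =>
    obtain ⟨a, b, rfl⟩ := hy
    by_cases hab : a ≤ b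
    · refine ⟨Finsupp.single (⟨(a,b), hab⟩ : Pairs k) 1, ?_⟩
      refine (Gprod_single N k (K:=K) _ 1).trans ((pow_one _).trans ?_)
      rfl
    · have hba : b ≤ a := le_of_not_ge hab
      refine ⟨Finsupp.single (⟨(b,a), hba⟩ : Pairs k) 1, ?_⟩
      refine (Gprod_single N k (K:=K) _ 1).trans ((pow_one _).trans ?_)
      exact gp_comm N k b a
  | one => exact ⟨0, Gprod_zero N k⟩
  | mul y z hy hz ihy ihz =>
    obtain ⟨e, rfl⟩ := ihy
    obtain ⟨e', rfl⟩ := ihz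
    exact ⟨e + e', Gprod_add N k e e'⟩

lemma mem_rep (x : Algebra.adjoin K (Sset N k (K:=K))) :
    ∃ c : (Pairs k →₀ ℕ) →₀ K,
      (c.sum fun e a => a • Gprod N k (K:=K) e) = (x : MvPolynomial (Fin N × Fin (2*k)) K) := by
  obtain ⟨x, hx⟩ := x
  rw [← Subalgebra.mem_toSubmodule, Algebra.adjoin_eq_span] at hx
  have hle : Submodule.span K ((Submonoid.closure (Sset N k (K:=K)) : Submonoid _) : Set _)
      ≤ Submodule.span K (Set.range (Gprod N k (K:=K))) := by
    apply Submodule.span_mono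
    intro y hy
    obtain ⟨e, he⟩ := closure_sub N k y hy
    exact ⟨e, he⟩
  exact Finsupp.mem_span_range_iff_exists_finsupp.mp (hle hx)

/-- the prospective basis map. -/
def theta : (RedT N k hst →₀ (Algebra.adjoin K (Sset N k (K:=K))))
    →ₗ[Algebra.adjoin K (Sset N k (K:=K))] MvPolynomial (Fin N × Fin (2*k)) K :=
  Finsupp.linearCombination _ (fun μ : RedT N k hst => monomial μ.1 (1:K))

lemma smul_sub_def (b : Algebra.adjoin K (Sset N k (K:=K)))
    (f : MvPolynomial (Fin N × Fin (2*k)) K) : b • f = (b : MvPolynomial _ K) * f := rfl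

lemma theta_surjective : Function.Surjective (theta N k hst (K:=K)) := by
  classical
  intro f
  obtain ⟨C, hC⟩ := Finsupp.mem_span_range_iff_exists_finsupp.mp (spanVR N k hst f)
  refine ⟨C.sum fun x a =>
    Finsupp.single x.2 (⟨a • Gprod N k x.1,
      Subalgebra.smul_mem _ (Gprod_mem N k x.1) a⟩ : Algebra.adjoin K (Sset N k (K:=K))), ?_⟩
  rw [Finsupp.sum, map_sum]
  rw [← hC, Finsupp.sum]
  apply Finset.sum_congr rfl
  intro x _
  rw [theta, Finsupp.linearCombination_single]
  rw [smul_sub_def]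
  show (C x • Gprod N k x.1) * monomial x.2.1 (1:K) = C x • VR N k hst x
  rw [smul_mul_assoc]
  rfl

lemma theta_injective : Function.Injective (theta N k hst (K:=K)) := by
  classical
  have hker : ∀ dd, theta N k hst (K:=K) dd = 0 → dd = 0 := by
    intro dd hdd
    by_contra hne
    have hsupp : dd.support.Nonempty := Finsupp.support_nonempty_iff.mpr hne
    choose rep hrep using fun μ : RedT N k hst => mem_rep N k (dd μ)
    set T : Finset ((Pairs k →₀ ℕ) × RedT N k hst) :=
      dd.support.biUnion (fun μ => (rep μ).support.image (fun e => (e, μ))) with hT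
    have hdisj : (dd.support : Set (RedT N k hst)).PairwiseDisjoint
        (fun μ => (rep μ).support.image (fun e => (e, μ))) := by
      intro μ hμ μ' hμ' hne'
      simp only [Function.onFun]
      rw [Finset.disjoint_left]
      rintro x hx hx'
      obtain ⟨e, _, rfl⟩ := Finset.mem_image.mp hx
      obtain ⟨e', _, heq⟩ := Finset.mem_image.mp hx'
      exact hne' (congrArg Prod.snd heq).symm
    have hsum : ∑ x ∈ T, ((rep x.2) x.1) • VR N k hst (K:=K) x = 0 := by
      rw [hT, Finset.sum_biUnion hdisj]
      have hinner : ∀ μ ∈ dd.support,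
          ∑ x ∈ (rep μ).support.image (fun e => (e, μ)), ((rep x.2) x.1) • VR N k hst (K:=K) x
            = ((dd μ : MvPolynomial (Fin N × Fin (2*k)) K)) * monomial μ.1 (1:K) := by
        intro μ _
        rw [Finset.sum_image (fun e _ e' _ h => (Prod.mk.injEq _ _ _ _ ▸ h).1)]
        have : ∀ e ∈ (rep μ).support, ((rep μ) e) • VR N k hst (K:=K) (e, μ)
            = ((rep μ) e • Gprod N k (K:=K) e) * monomial μ.1 (1:K) := by
          intro e _
          rw [smul_mul_assoc]
          rfl
        rw [Finset.sum_congr rfl this, ← Finset.sum_mul]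
        congr 1
        rw [← hrep μ, Finsupp.sum]
      rw [Finset.sum_congr rfl hinner]
      have : ∀ μ ∈ dd.support, (dd μ : MvPolynomial (Fin N × Fin (2*k)) K) * monomial μ.1 (1:K)
          = (dd μ) • monomial μ.1 (1:K) := fun μ _ => rfl
      rw [Finset.sum_congr rfl this]
      have htheta : theta N k hst (K:=K) dd
          = ∑ μ ∈ dd.support, (dd μ) • monomial μ.1 (1:K) := by
        rw [theta, Finsupp.linearCombination_apply]
        rfl
      rw [← htheta]
      exact hdd
    have hzero := indep N k hst T _ hsum
    obtain ⟨μ, hμ⟩ := hsupp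
    have hrepz : ∀ e ∈ (rep μ).support, (rep μ) e = 0 := by
      intro e he
      have hxT : (e, μ) ∈ T := Finset.mem_biUnion.mpr
        ⟨μ, hμ, Finset.mem_image.mpr ⟨e, he, rfl⟩⟩
      exact hzero (e, μ) hxT
    have hddμ : (dd μ : MvPolynomial (Fin N × Fin (2*k)) K) = 0 := by
      rw [← hrep μ, Finsupp.sum]
      exact Finset.sum_eq_zero fun e he => by rw [hrepz e he, zero_smul]
    exact Finsupp.mem_support_iff.mp hμ (Subtype.ext hddμ)
  exact (injective_iff_map_eq_zero _).mpr hker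

end Subalg

end FreeMomentSp
end

open FreeMomentSp in
/-- For the dual pair `(o_N, sp_{2k})` in the stable range `N ≥ 4k`, the
polynomial ring `R = K[z_{ia}]` is a free module over the subalgebra generated by the moment
map components `g_{ab} = Σ_i z_{ia} z_{ib}`. -/
theorem free_over_moment_map_subalgebra_sp
    (K : Type*) [Field K] [IsAlgClosed K] [CharZero K]
    (N k : ℕ) (hN : 0 < N) (hk : 0 < k) (hstable : 4 * k ≤ N) :
    Module.Free
      (Algebra.adjoin K
        {p : MvPolynomial (Fin N × Fin (2 * k)) K |
          ∃ a b : Fin (2 * k), p = ∑ i : Fin N, X (i, a) * X (i, b)})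
      (MvPolynomial (Fin N × Fin (2 * k)) K) := by
  show Module.Free (Algebra.adjoin K (Sset N k (K:=K))) (MvPolynomial (Fin N × Fin (2 * k)) K)
  exact Module.Free.of_equiv (LinearEquiv.ofBijective (theta N k hstable (K:=K))
    ⟨theta_injective N k hstable, theta_surjective N k hstable⟩)
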